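/- With notation as in the context, let f ∈ P be a polynomial such that σ_μ(f) − f ∈ I for every μ : Q_0 → ℂˣ. Then the image of f in R = P/I lies in the ℂ-subalgebra of R generated by the images of the two-cycles d_{k,i}·u_{k,i} (for all k ∈ {1,2,3}, 1 ≤ i ≤ p_k) together with the images of D_kU_l for all k, l ∈ {1,2,3}. (That is, the ring of torus invariants R^G is generated as a ℂ-algebra by the set S_1 consisting of the two-cycles and the cycles D_kU_l.) -/

import Mathlib

open MvPolynomial

/-- The index type of the arrow variables: `Sum.inl ⟨k, i⟩` is the downward arrow
`d_{k,i+1}` and `Sum.inr ⟨k, i⟩` is the upward arrow `u_{k,i+1}` (arm `k`, `i : Fin (p k)`). -/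
abbrev ReconArrows (p : Fin 3 → ℕ) : Type := (Σ k : Fin 3, Fin (p k)) ⊕ (Σ k : Fin 3, Fin (p k))

/-- The polynomial ring `P = ℂ[d_{k,i}, u_{k,i}]`. -/
abbrev ReconP (p : Fin 3 → ℕ) : Type := MvPolynomial (ReconArrows p) ℂ

/-- The vertex set `Q₀` of the quiver: `Sum.inl ()` is the top vertex `⊤`,
`Sum.inr (Sum.inl ())` is the bottom vertex `⊥`, and `Sum.inr (Sum.inr (k, i))` is the
arm vertex `v_{k,i}` (only those with `1 ≤ i ≤ p k - 1` actually occur). -/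
abbrev ReconVtx : Type := Unit ⊕ Unit ⊕ (Fin 3 × ℕ)

/-- The vertex `v_{k,i}` on arm `k` (with the convention `v_{k,0} = ⊤`, `v_{k,p_k} = ⊥`). -/
def reconVert (p : Fin 3 → ℕ) (k : Fin 3) (i : ℕ) : ReconVtx :=
  if i = 0 then Sum.inl () else if i = p k then Sum.inr (Sum.inl ())
  else Sum.inr (Sum.inr (k, i))

/-- The tail of an arrow: `d_{k,i+1}` has tail `v_{k,i}`, and `u_{k,i+1}` has tail `v_{k,i+1}`. -/
def reconTail (p : Fin 3 → ℕ) : ReconArrows p → ReconVtx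
  | Sum.inl ⟨k, i⟩ => reconVert p k i
  | Sum.inr ⟨k, i⟩ => reconVert p k (i + 1)

/-- The head of an arrow: `d_{k,i+1}` has head `v_{k,i+1}`, and `u_{k,i+1}` has head `v_{k,i}`. -/
def reconHead (p : Fin 3 → ℕ) : ReconArrows p → ReconVtx
  | Sum.inl ⟨k, i⟩ => reconVert p k (i + 1)
  | Sum.inr ⟨k, i⟩ => reconVert p k i

/-- The conjugation action `σ_μ : P → P` of `μ : Q₀ → ℂˣ`, sending the variable of each
arrow `e` to `μ(t(e))⁻¹ · μ(h(e))` times itself. -/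
noncomputable def reconSigma (p : Fin 3 → ℕ) (μ : ReconVtx → ℂˣ) :
    ReconP p →ₐ[ℂ] ReconP p :=
  aeval fun e => C ((μ (reconTail p e) : ℂ)⁻¹ * (μ (reconHead p e) : ℂ)) * X e

/-- `D_k = d_{k,1}⋯d_{k,p_k}`. -/
noncomputable def ReconD (p : Fin 3 → ℕ) (k : Fin 3) : ReconP p :=
  ∏ i : Fin (p k), X (Sum.inl ⟨k, i⟩)

/-- `U_k = u_{k,1}⋯u_{k,p_k}`. -/
noncomputable def ReconU (p : Fin 3 → ℕ) (k : Fin 3) : ReconP p :=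
  ∏ i : Fin (p k), X (Sum.inr ⟨k, i⟩)

/-- The ideal `I = (D₁ - D₂ + D₃)` generated by the canonical relation. -/
noncomputable def ReconI (p : Fin 3 → ℕ) : Ideal (ReconP p) :=
  Ideal.span {ReconD p 0 - ReconD p 1 + ReconD p 2}

/-- The quotient `R = P/I`. -/
abbrev ReconR (p : Fin 3 → ℕ) : Type := ReconP p ⧸ ReconI p

/-- The quotient algebra map `π : P → R`. -/
noncomputable def reconPi (p : Fin 3 → ℕ) : ReconP p →ₐ[ℂ] ReconR p :=
  Ideal.Quotient.mkₐ ℂ _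

/-- The weight of the arrow variable `e`. -/
noncomputable def rwt (p : Fin 3 → ℕ) (e : ReconArrows p) : ReconVtx →₀ ℤ :=
  Finsupp.single (reconHead p e) 1 - Finsupp.single (reconTail p e) 1

/-- The character of the torus element `μ`, as an additive hom. -/
noncomputable def chiHom (μ : ReconVtx → ℂˣ) : (ReconVtx →₀ ℤ) →+ Additive ℂˣ :=
  Finsupp.liftAddHom fun q => zmultiplesHom (Additive ℂˣ) (Additive.ofMul (μ q))

noncomputable def chiU (μ : ReconVtx → ℂˣ) (ω : ReconVtx →₀ ℤ) : ℂˣ :=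
  Additive.toMul (chiHom μ ω)

lemma chiU_single (μ : ReconVtx → ℂˣ) (q : ReconVtx) (n : ℤ) :
    chiU μ (Finsupp.single q n) = μ q ^ n := by
  simp [chiU, chiHom, Finsupp.liftAddHom_apply_single]

lemma chiU_rwt (p : Fin 3 → ℕ) (μ : ReconVtx → ℂˣ) (e : ReconArrows p) :
    chiU μ (rwt p e) = μ (reconHead p e) * (μ (reconTail p e))⁻¹ := by
  have : chiU μ (rwt p e) =
      chiU μ (Finsupp.single (reconHead p e) 1) * (chiU μ (Finsupp.single (reconTail p e) 1))⁻¹ := by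
    simp only [chiU, rwt, map_sub]
    rfl
  rw [this, chiU_single, chiU_single, zpow_one, zpow_one]

lemma chiU_weight (p : Fin 3 → ℕ) (μ : ReconVtx → ℂˣ) (d : ReconArrows p →₀ ℕ) :
    ((chiU μ (Finsupp.weight (rwt p) d) : ℂˣ) : ℂ) =
      d.prod fun e k => ((μ (reconTail p e) : ℂ)⁻¹ * (μ (reconHead p e) : ℂ)) ^ k := by
  have h1 : chiU μ (Finsupp.weight (rwt p) d) = d.prod fun e k => (chiU μ (rwt p e)) ^ k := by
    rw [Finsupp.weight_apply, chiU]
    rw [Finsupp.sum, map_sum, Finsupp.prod, toMul_sum]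
    refine Finset.prod_congr rfl fun e _ => ?_
    rw [map_nsmul, toMul_nsmul]
    rfl
  rw [h1, ← Units.coeHom_apply, map_finsuppProd]
  refine Finsupp.prod_congr fun e _ => ?_
  simp only [Units.coeHom_apply, Units.val_pow_eq_pow_val, chiU_rwt, Units.val_mul]
  rw [Units.val_inv_eq_inv_val, mul_comm]

lemma reconSigma_monomial (p : Fin 3 → ℕ) (μ : ReconVtx → ℂˣ) (d : ReconArrows p →₀ ℕ) (c : ℂ) :
    reconSigma p μ (monomial d c) =
      C ((chiU μ (Finsupp.weight (rwt p) d) : ℂˣ) : ℂ) * monomial d c := by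
  rw [reconSigma, aeval_monomial, chiU_weight, monomial_eq]
  simp only [mul_pow, ← C_pow]
  rw [Finsupp.prod_mul, ← map_finsuppProd (C : ℂ →+* ReconP p), algebraMap_eq]
  ring

lemma reconSigma_isHomog (p : Fin 3 → ℕ) (μ : ReconVtx → ℂˣ) {g : ReconP p} {ω : ReconVtx →₀ ℤ}
    (hg : IsWeightedHomogeneous (rwt p) g ω) :
    reconSigma p μ g = C ((chiU μ ω : ℂˣ) : ℂ) * g := by
  conv_lhs => rw [g.as_sum]
  rw [map_sum]
  conv_rhs => rw [g.as_sum, Finset.mul_sum]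
  exact Finset.sum_congr rfl fun d hd => by
    rw [reconSigma_monomial, hg (mem_support_iff.mp hd)]

/-- The weight of the canonical relation. -/
noncomputable def omega0 : ReconVtx →₀ ℤ :=
  Finsupp.single (Sum.inr (Sum.inl ())) 1 - Finsupp.single (Sum.inl ()) 1

set_option maxHeartbeats 1000000 in
lemma reconD_homog (p : Fin 3 → ℕ) (hp : ∀ k, 0 < p k) (k : Fin 3) :
    IsWeightedHomogeneous (rwt p) (ReconD p k) omega0 := by
  have h : IsWeightedHomogeneous (rwt p) (∏ i : Fin (p k), (X (Sum.inl (Sigma.mk k i)) : MvPolynomial (ReconArrows p) ℂ))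
      (∑ i : Fin (p k), rwt p (Sum.inl (Sigma.mk k i))) :=
    IsWeightedHomogeneous.prod Finset.univ _ _
      (fun i _ => isWeightedHomogeneous_X ℂ (rwt p) _)
  have hsum : ∑ i : Fin (p k), rwt p (Sum.inl ⟨k, i⟩) = omega0 := by
    have : ∀ i : Fin (p k), rwt p (Sum.inl ⟨k, i⟩) =
        Finsupp.single (reconVert p k ((i : ℕ) + 1)) 1 - Finsupp.single (reconVert p k i) 1 :=
      fun i => rfl
    simp only [this]
    rw [Fin.sum_univ_eq_sum_range
      (fun i => Finsupp.single (reconVert p k (i + 1)) (1:ℤ) - Finsupp.single (reconVert p k i) 1)]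
    rw [Finset.sum_range_sub (fun i => Finsupp.single (reconVert p k i) (1:ℤ))]
    have h0 : reconVert p k 0 = Sum.inl () := by simp [reconVert]
    have hpk : reconVert p k (p k) = Sum.inr (Sum.inl ()) := by
      simp [reconVert, (hp k).ne']
    rw [h0, hpk]; rfl
  rw [← hsum]; exact h

lemma relPoly_homog (p : Fin 3 → ℕ) (hp : ∀ k, 0 < p k) :
    IsWeightedHomogeneous (rwt p) (ReconD p 0 - ReconD p 1 + ReconD p 2) omega0 := by
  have h0 := reconD_homog p hp 0
  have h1 := reconD_homog p hp 1
  have h2 := reconD_homog p hp 2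
  rw [← mem_weightedHomogeneousSubmodule ℂ] at h0 h1 h2 ⊢
  exact add_mem (sub_mem h0 h1) h2

lemma comp_mem_reconI (p : Fin 3 → ℕ) (hp : ∀ k, 0 < p k) {x : ReconP p}
    (hx : x ∈ ReconI p) (ω : ReconVtx →₀ ℤ) :
    weightedHomogeneousComponent (rwt p) ω x ∈ ReconI p := by
  classical
  obtain ⟨h, rfl⟩ := Ideal.mem_span_singleton'.mp hx
  have hfin := weightedHomogeneousComponent_finsupp (w := rwt p) (φ := h)
  have hdec : h = ∑ m ∈ hfin.toFinset, weightedHomogeneousComponent (rwt p) m h := by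
    rw [← finsum_eq_sum _ hfin, sum_weightedHomogeneousComponent]
  have : weightedHomogeneousComponent (rwt p) ω (h * (ReconD p 0 - ReconD p 1 + ReconD p 2)) =
      ∑ m ∈ hfin.toFinset, weightedHomogeneousComponent (rwt p) ω
        (weightedHomogeneousComponent (rwt p) m h * (ReconD p 0 - ReconD p 1 + ReconD p 2)) := by
    conv_lhs => rw [hdec]
    rw [Finset.sum_mul, map_sum]
  rw [this]
  refine Ideal.sum_mem _ fun m _ => ?_
  have hhom : IsWeightedHomogeneous (rwt p)
      (weightedHomogeneousComponent (rwt p) m h * (ReconD p 0 - ReconD p 1 + ReconD p 2))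
      (m + omega0) :=
    (weightedHomogeneousComponent_isWeightedHomogeneous m h).mul (relPoly_homog p hp)
  by_cases hω : ω = m + omega0
  · subst hω
    rw [hhom.weightedHomogeneousComponent_same]
    exact Ideal.mem_span_singleton'.mpr ⟨_, rfl⟩
  · rw [hhom.weightedHomogeneousComponent_ne ω hω]
    exact zero_mem _

lemma chiU_apply (μ : ReconVtx → ℂˣ) (ω : ReconVtx →₀ ℤ) :
    chiU μ ω = ω.prod fun q n => μ q ^ n := by
  rw [chiU, chiHom, Finsupp.liftAddHom_apply]
  rw [Finsupp.sum, Finsupp.prod, toMul_sum]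
  refine Finset.prod_congr rfl fun q _ => ?_
  rw [zmultiplesHom_apply, toMul_zsmul]
  rfl

lemma comp_ne_zero_mem (p : Fin 3 → ℕ) (hp : ∀ k, 0 < p k) (f : ReconP p)
    (hf : ∀ μ : ReconVtx → ℂˣ, reconSigma p μ f - f ∈ ReconI p)
    {m : ReconVtx →₀ ℤ} (hm : m ≠ 0) :
    weightedHomogeneousComponent (rwt p) m f ∈ ReconI p := by
  classical
  obtain ⟨q, hq⟩ : ∃ q, m q ≠ 0 := by
    by_contra hc
    push_neg at hc
    exact hm (Finsupp.ext hc)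
  set u2 : ℂˣ := Units.mk0 (2:ℂ) two_ne_zero with hu2
  set μ : ReconVtx → ℂˣ := fun q' => if q' = q then u2 else 1 with hμ
  have hchi : chiU μ m = u2 ^ (m q) := by
    rw [chiU_apply, Finsupp.prod]
    rw [Finset.prod_eq_single_of_mem q (Finsupp.mem_support_iff.mpr hq)]
    · simp [hμ]
    · intro q' _ hq'
      simp [hμ, hq']
  have hne : ((chiU μ m : ℂˣ) : ℂ) ≠ 1 := by
    rw [hchi]
    intro hcontra
    have h2 : ((2:ℂ) ^ (m q) : ℂ) = 1 := by
      rw [← hcontra, Units.val_zpow_eq_zpow_val]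
      rfl
    have habs : (2:ℝ) ^ (m q) = 1 := by
      have := congrArg (‖·‖) h2
      rwa [norm_zpow, Complex.norm_two, norm_one] at this
    have := zpow_right_injective₀ (by norm_num : (0:ℝ) < 2) (by norm_num : (2:ℝ) ≠ 1)
      (habs.trans (zpow_zero (2:ℝ)).symm)
    exact hq this
  -- decompose f
  have hfin := weightedHomogeneousComponent_finsupp (w := rwt p) (φ := f)
  have hdec : f = ∑ m' ∈ hfin.toFinset, weightedHomogeneousComponent (rwt p) m' f := by
    rw [← finsum_eq_sum _ hfin, sum_weightedHomogeneousComponent]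
  have hσ : reconSigma p μ f - f = ∑ m' ∈ hfin.toFinset,
      C (((chiU μ m' : ℂˣ) : ℂ) - 1) * weightedHomogeneousComponent (rwt p) m' f := by
    conv_lhs => rw [hdec]
    rw [map_sum, ← Finset.sum_sub_distrib]
    refine Finset.sum_congr rfl fun m' _ => ?_
    rw [reconSigma_isHomog p μ (weightedHomogeneousComponent_isWeightedHomogeneous m' f)]
    rw [map_sub, C_1, sub_mul, one_mul]
  have hcomp : weightedHomogeneousComponent (rwt p) m (reconSigma p μ f - f) =
      C (((chiU μ m : ℂˣ) : ℂ) - 1) * weightedHomogeneousComponent (rwt p) m f := by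
    rw [hσ, map_sum]
    rw [Finset.sum_eq_single m]
    · rw [C_mul', LinearMap.map_smul,
        (weightedHomogeneousComponent_isWeightedHomogeneous m f).weightedHomogeneousComponent_same,
        ← C_mul']
    · intro m' _ hm'
      rw [C_mul', LinearMap.map_smul,
        (weightedHomogeneousComponent_isWeightedHomogeneous m' f).weightedHomogeneousComponent_ne
          m hm'.symm, smul_zero]
    · intro hnotmem
      have : weightedHomogeneousComponent (rwt p) m f = 0 := by
        by_contra hne0
        exact hnotmem (hfin.mem_toFinset.mpr hne0)
      rw [this, mul_zero, map_zero]
  have hI : C (((chiU μ m : ℂˣ) : ℂ) - 1) * weightedHomogeneousComponent (rwt p) m f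
      ∈ ReconI p := by
    rw [← hcomp]
    exact comp_mem_reconI p hp (hf μ) m
  have hinv : (((chiU μ m : ℂˣ) : ℂ) - 1) ≠ 0 := sub_ne_zero.mpr hne
  have : weightedHomogeneousComponent (rwt p) m f =
      C ((((chiU μ m : ℂˣ) : ℂ) - 1)⁻¹) *
        (C (((chiU μ m : ℂˣ) : ℂ) - 1) * weightedHomogeneousComponent (rwt p) m f) := by
    rw [← mul_assoc, ← map_mul, inv_mul_cancel₀ hinv, C_1, one_mul]
  rw [this]
  exact Ideal.mul_mem_left _ _ hI

lemma vert_eq_top_iff (p : Fin 3 → ℕ) (k : Fin 3) (m : ℕ) :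
    reconVert p k m = Sum.inl () ↔ m = 0 := by
  unfold reconVert
  split_ifs with h1 h2 <;> simp_all

lemma vert_eq_arm_iff (p : Fin 3 → ℕ) {k : Fin 3} {i : ℕ} (hi0 : i ≠ 0) (hip : i < p k)
    (k' : Fin 3) (m : ℕ) :
    reconVert p k' m = Sum.inr (Sum.inr (k, i)) ↔ k' = k ∧ m = i := by
  unfold reconVert
  split_ifs with h1 h2
  · simp only [reduceCtorEq, false_iff]
    rintro ⟨rfl, rfl⟩; exact hi0 h1
  · simp only [Sum.inr.injEq, reduceCtorEq, false_iff]
    rintro ⟨rfl, rfl⟩; exact absurd h2 hip.ne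
  · simp only [Sum.inr.injEq, Prod.mk.injEq]

/-- The imbalance of exponent `d` at position `(k,j)`. -/
def delta (p : Fin 3 → ℕ) (d : ReconArrows p →₀ ℕ) (k : Fin 3) (j : Fin (p k)) : ℤ :=
  (d (Sum.inl ⟨k, j⟩) : ℤ) - (d (Sum.inr ⟨k, j⟩) : ℤ)

lemma weight_eq (p : Fin 3 → ℕ) (d : ReconArrows p →₀ ℕ) :
    Finsupp.weight (rwt p) d = ∑ k : Fin 3, ∑ j : Fin (p k),
      delta p d k j •
        (Finsupp.single (reconVert p k ((j : ℕ) + 1)) (1:ℤ)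
          - Finsupp.single (reconVert p k j) 1) := by
  rw [Finsupp.weight_apply]
  rw [Finsupp.sum_fintype d (fun i c => c • rwt p i) (fun i => zero_smul ℕ (rwt p i))]
  rw [Fintype.sum_sum_type]
  rw [← Finset.univ_sigma_univ, Finset.sum_sigma, Finset.sum_sigma, ← Finset.sum_add_distrib]
  refine Finset.sum_congr rfl fun k _ => ?_
  rw [← Finset.sum_add_distrib]
  refine Finset.sum_congr rfl fun j _ => ?_
  have h1 : rwt p (Sum.inl ⟨k, j⟩) =
      Finsupp.single (reconVert p k ((j:ℕ) + 1)) 1 - Finsupp.single (reconVert p k j) 1 := rfl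
  have h2 : rwt p (Sum.inr ⟨k, j⟩) =
      Finsupp.single (reconVert p k j) 1 - Finsupp.single (reconVert p k ((j:ℕ) + 1)) 1 := rfl
  rw [h1, h2, delta, sub_smul,
    ← neg_sub (Finsupp.single (reconVert p k ((j:ℕ)+1)) (1:ℤ))
      (Finsupp.single (reconVert p k (j:ℕ)) 1),
    smul_neg, ← natCast_zsmul, ← natCast_zsmul, ← sub_eq_add_neg]

lemma balance_of_weight_zero (p : Fin 3 → ℕ) (hp : ∀ k, 0 < p k) {d : ReconArrows p →₀ ℕ}
    (hw : Finsupp.weight (rwt p) d = 0) :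
    (∀ k (j : Fin (p k)), delta p d k j = delta p d k ⟨0, hp k⟩) ∧
      (∑ k, delta p d k ⟨0, hp k⟩) = 0 := by
  rw [weight_eq] at hw
  have heval : ∀ q : ReconVtx, (0:ℤ) = ∑ k : Fin 3, ∑ j : Fin (p k),
      delta p d k j * ((if reconVert p k ((j:ℕ)+1) = q then (1:ℤ) else 0)
        - (if reconVert p k (j:ℕ) = q then 1 else 0)) := by
    intro q
    have := congrArg (fun ω : ReconVtx →₀ ℤ => ω q) hw.symm
    simpa [Finsupp.finset_sum_apply, Finsupp.smul_apply, Finsupp.sub_apply,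
      Finsupp.single_apply, smul_eq_mul] using this
  have hstep : ∀ (k : Fin 3) (j₀ : ℕ) (hj : j₀ + 1 < p k),
      delta p d k ⟨j₀, Nat.lt_of_succ_lt hj⟩ = delta p d k ⟨j₀ + 1, hj⟩ := by
    intro k₀ j₀ hj
    have h := heval (Sum.inr (Sum.inr (k₀, j₀ + 1)))
    rw [Finset.sum_eq_single k₀] at h
    · have hinner : ∀ j : Fin (p k₀),
          delta p d k₀ j * ((if reconVert p k₀ ((j:ℕ)+1) = Sum.inr (Sum.inr (k₀, j₀+1)) then (1:ℤ) else 0)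
            - (if reconVert p k₀ (j:ℕ) = Sum.inr (Sum.inr (k₀, j₀+1)) then 1 else 0)) =
          (if j = (⟨j₀, Nat.lt_of_succ_lt hj⟩ : Fin (p k₀)) then delta p d k₀ j else 0)
            - (if j = (⟨j₀ + 1, hj⟩ : Fin (p k₀)) then delta p d k₀ j else 0) := by
        intro j
        have c1 : (reconVert p k₀ ((j:ℕ)+1) = Sum.inr (Sum.inr (k₀, j₀+1))) ↔ (j:ℕ) = j₀ := by
          rw [vert_eq_arm_iff p (Nat.succ_ne_zero j₀) hj]
          constructor
          · rintro ⟨-, h⟩; omega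
          · intro h; exact ⟨rfl, by omega⟩
        have c2 : (reconVert p k₀ (j:ℕ) = Sum.inr (Sum.inr (k₀, j₀+1))) ↔ (j:ℕ) = j₀ + 1 := by
          rw [vert_eq_arm_iff p (Nat.succ_ne_zero j₀) hj]
          constructor
          · rintro ⟨-, h⟩; exact h
          · intro h; exact ⟨rfl, h⟩
        have c3 : (j = (⟨j₀, Nat.lt_of_succ_lt hj⟩ : Fin (p k₀))) ↔ (j:ℕ) = j₀ := by
          simp [Fin.ext_iff]
        have c4 : (j = (⟨j₀+1, hj⟩ : Fin (p k₀))) ↔ (j:ℕ) = j₀ + 1 := by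
          simp [Fin.ext_iff]
        simp only [c1, c2, c3, c4]
        by_cases hA : (j:ℕ) = j₀ <;> by_cases hB : (j:ℕ) = j₀ + 1 <;>
          simp [hA, hB]
      rw [Finset.sum_congr rfl (fun j _ => hinner j), Finset.sum_sub_distrib,
        Finset.sum_ite_eq' Finset.univ, Finset.sum_ite_eq' Finset.univ] at h
      simp only [Finset.mem_univ, if_pos] at h
      exact (sub_eq_zero.mp h.symm)
    · intro k _ hk
      apply Finset.sum_eq_zero
      intro j _
      simp only [vert_eq_arm_iff p (Nat.succ_ne_zero j₀) hj]
      simp [hk]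
    · intro h; exact absurd (Finset.mem_univ k₀) h
  have hconst : ∀ k (j : Fin (p k)), delta p d k j = delta p d k ⟨0, hp k⟩ := by
    intro k j
    obtain ⟨jv, hjv⟩ := j
    induction jv with
    | zero => rfl
    | succ n ih => rw [← hstep k n hjv, ih (Nat.lt_of_succ_lt hjv)]
  refine ⟨hconst, ?_⟩
  have h := heval (Sum.inl ())
  have htop : ∀ (k : Fin 3) (j : Fin (p k)),
      delta p d k j * ((if reconVert p k ((j:ℕ)+1) = Sum.inl () then (1:ℤ) else 0)
        - (if reconVert p k (j:ℕ) = Sum.inl () then 1 else 0)) =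
      -(if j = (⟨0, hp k⟩ : Fin (p k)) then delta p d k j else 0) := by
    intro k j
    have c1 : (reconVert p k ((j:ℕ)+1) = Sum.inl ()) ↔ False := by
      rw [vert_eq_top_iff]; simp
    have c2 : (reconVert p k (j:ℕ) = Sum.inl ()) ↔ (j:ℕ) = 0 := vert_eq_top_iff p k j
    have c3 : (j = (⟨0, hp k⟩ : Fin (p k))) ↔ (j:ℕ) = 0 := by simp [Fin.ext_iff]
    simp only [c1, c2, c3, if_false]
    by_cases hA : (j:ℕ) = 0 <;> simp [hA]
  simp only [htop] at h
  rw [Finset.sum_congr rfl (fun k _ => Finset.sum_neg_distrib _)] at h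
  have hsel : ∀ k : Fin 3, ∑ j : Fin (p k),
      (if j = (⟨0, hp k⟩ : Fin (p k)) then delta p d k j else 0) = delta p d k ⟨0, hp k⟩ := by
    intro k
    rw [Finset.sum_ite_eq' Finset.univ]
    simp
  simp only [hsel] at h
  have : ∑ k : Fin 3, -(delta p d k ⟨0, hp k⟩) = -∑ k : Fin 3, delta p d k ⟨0, hp k⟩ :=
    Finset.sum_neg_distrib _
  rw [this] at h
  linarith [h]

/-- The generating set in `P`. -/
noncomputable def S0 (p : Fin 3 → ℕ) : Set (ReconP p) :=
  (Set.range fun ki : Σ k : Fin 3, Fin (p k) =>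
    (X (Sum.inl ki) * X (Sum.inr ki) : ReconP p)) ∪
  Set.range fun kl : Fin 3 × Fin 3 => ReconD p kl.1 * ReconU p kl.2

lemma prod_monomial_one {ι : Type*} (p : Fin 3 → ℕ) (s : Finset ι)
    (g : ι → (ReconArrows p →₀ ℕ)) :
    (∏ i ∈ s, (monomial (g i) (1:ℂ) : ReconP p)) = monomial (∑ i ∈ s, g i) 1 := by
  classical
  induction s using Finset.induction with
  | empty => simp [monomial_zero']
  | insert _ _ hnot ih =>
    rw [Finset.prod_insert hnot, Finset.sum_insert hnot, ih, monomial_mul, one_mul]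

lemma X_eq_monomial (p : Fin 3 → ℕ) (e : ReconArrows p) :
    (X e : ReconP p) = monomial (Finsupp.single e 1) 1 := rfl

lemma reconD_eq_monomial (p : Fin 3 → ℕ) (k : Fin 3) :
    ReconD p k = monomial (∑ j : Fin (p k), Finsupp.single (Sum.inl (Sigma.mk k j)) 1) 1 := by
  rw [ReconD, ← prod_monomial_one]
  rfl

lemma reconU_eq_monomial (p : Fin 3 → ℕ) (k : Fin 3) :
    ReconU p k = monomial (∑ j : Fin (p k), Finsupp.single (Sum.inr (Sigma.mk k j)) 1) 1 := by
  rw [ReconU, ← prod_monomial_one]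
  rfl

lemma sum_single_apply_inl (p : Fin 3 → ℕ) (k : Fin 3) (e : ReconArrows p) :
    (∑ j : Fin (p k), Finsupp.single (Sum.inl (Sigma.mk k j) : ReconArrows p) (1:ℕ)) e =
      if ∃ j : Fin (p k), e = Sum.inl (Sigma.mk k j) then 1 else 0 := by
  classical
  rw [Finsupp.finset_sum_apply]
  by_cases h : ∃ j : Fin (p k), e = Sum.inl (Sigma.mk k j)
  · obtain ⟨j0, rfl⟩ := h
    rw [if_pos ⟨j0, rfl⟩]
    rw [Finset.sum_eq_single j0]
    · simp
    · intro j _ hj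
      rw [Finsupp.single_apply, if_neg]
      intro hc
      apply hj
      have := (Sum.inl.injEq _ _).mp hc
      exact (Sigma.mk.inj_iff.mp this).2.symm.eq.symm ▸ rfl
    · intro hc; exact absurd (Finset.mem_univ j0) hc
  · rw [if_neg h]
    apply Finset.sum_eq_zero
    intro j _
    rw [Finsupp.single_apply, if_neg]
    intro hc
    exact h ⟨j, hc.symm⟩

lemma sum_single_apply_inr (p : Fin 3 → ℕ) (k : Fin 3) (e : ReconArrows p) :
    (∑ j : Fin (p k), Finsupp.single (Sum.inr (Sigma.mk k j) : ReconArrows p) (1:ℕ)) e =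
      if ∃ j : Fin (p k), e = Sum.inr (Sigma.mk k j) then 1 else 0 := by
  classical
  rw [Finsupp.finset_sum_apply]
  by_cases h : ∃ j : Fin (p k), e = Sum.inr (Sigma.mk k j)
  · obtain ⟨j0, rfl⟩ := h
    rw [if_pos ⟨j0, rfl⟩]
    rw [Finset.sum_eq_single j0]
    · simp
    · intro j _ hj
      rw [Finsupp.single_apply, if_neg]
      intro hc
      apply hj
      have := (Sum.inr.injEq _ _).mp hc
      exact (Sigma.mk.inj_iff.mp this).2.symm.eq.symm ▸ rfl
    · intro hc; exact absurd (Finset.mem_univ j0) hc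
  · rw [if_neg h]
    apply Finset.sum_eq_zero
    intro j _
    rw [Finsupp.single_apply, if_neg]
    intro hc
    exact h ⟨j, hc.symm⟩

lemma monomial_mem_adjoin (p : Fin 3 → ℕ) (hp : ∀ k, 0 < p k) :
    ∀ N (d : ReconArrows p →₀ ℕ), (∑ e : ReconArrows p, d e) = N →
    (∀ k (j : Fin (p k)), delta p d k j = delta p d k ⟨0, hp k⟩) →
    (∑ k, delta p d k ⟨0, hp k⟩) = 0 →
    (monomial d (1:ℂ) : ReconP p) ∈ Algebra.adjoin ℂ (S0 p) := by
  intro N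
  induction N using Nat.strong_induction_on with
  | _ N ih =>
  intro d hN hconst hsum
  classical
  by_cases hpos : ∃ k, 0 < delta p d k ⟨0, hp k⟩
  · obtain ⟨k, hk⟩ := hpos
    have hneg : ∃ l, delta p d l ⟨0, hp l⟩ < 0 := by
      by_contra hno
      push_neg at hno
      have hge : delta p d k ⟨0, hp k⟩ ≤ ∑ k', delta p d k' ⟨0, hp k'⟩ :=
        Finset.single_le_sum (fun l _ => hno l) (Finset.mem_univ k)
      omega
    obtain ⟨l, hl⟩ := hneg
    set b : ReconArrows p →₀ ℕ :=
      (∑ j : Fin (p k), Finsupp.single (Sum.inl (Sigma.mk k j)) 1) +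
      (∑ j : Fin (p l), Finsupp.single (Sum.inr (Sigma.mk l j)) 1) with hb
    have hbinl : ∀ (k' : Fin 3) (j' : Fin (p k')),
        b (Sum.inl ⟨k', j'⟩) = if k' = k then 1 else 0 := by
      intro k' j'
      have h2 : ¬ ∃ j : Fin (p l), (Sum.inl ⟨k', j'⟩ : ReconArrows p) = Sum.inr ⟨l, j⟩ := by
        rintro ⟨j, hc⟩; cases hc
      rw [hb, Finsupp.add_apply, sum_single_apply_inl, sum_single_apply_inr,
        if_neg h2, add_zero]
      by_cases h : k' = k
      · subst h
        rw [if_pos ⟨j', rfl⟩, if_pos rfl]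
      · rw [if_neg, if_neg h]
        rintro ⟨j, hc⟩
        exact h (Sigma.mk.inj_iff.mp ((Sum.inl.injEq _ _).mp hc)).1
    have hbinr : ∀ (l' : Fin 3) (j' : Fin (p l')),
        b (Sum.inr ⟨l', j'⟩) = if l' = l then 1 else 0 := by
      intro l' j'
      have h2 : ¬ ∃ j : Fin (p k), (Sum.inr ⟨l', j'⟩ : ReconArrows p) = Sum.inl ⟨k, j⟩ := by
        rintro ⟨j, hc⟩; cases hc
      rw [hb, Finsupp.add_apply, sum_single_apply_inl, sum_single_apply_inr,
        if_neg h2, zero_add]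
      by_cases h : l' = l
      · subst h
        rw [if_pos ⟨j', rfl⟩, if_pos rfl]
      · rw [if_neg, if_neg h]
        rintro ⟨j, hc⟩
        exact h (Sigma.mk.inj_iff.mp ((Sum.inr.injEq _ _).mp hc)).1
    have hble : ∀ e, b e ≤ d e := by
      intro e
      rcases e with ⟨k', j'⟩ | ⟨l', j'⟩
      · rw [hbinl]
        split_ifs with h
        · subst h
          have h1 := hconst k' j'
          unfold delta at h1 hk
          omega
        · exact Nat.zero_le _
      · rw [hbinr]
        split_ifs with h
        · subst h
          have h1 := hconst l' j'
          unfold delta at h1 hl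
          omega
        · exact Nat.zero_le _
    set d' : ReconArrows p →₀ ℕ := d - b with hd'
    have hval : ∀ e, d' e = d e - b e := fun e => Finsupp.tsub_apply d b e
    have hdbd' : d = b + d' := by
      ext e
      rw [Finsupp.add_apply, hval]
      have := hble e
      omega
    have hgen : (monomial b (1:ℂ) : ReconP p) ∈ S0 p := by
      refine Set.mem_union_right _ ⟨(k, l), ?_⟩
      show ReconD p k * ReconU p l = monomial b 1
      rw [reconD_eq_monomial, reconU_eq_monomial, monomial_mul, one_mul, hb]
    have hd'inl : ∀ (k' : Fin 3) (j' : Fin (p k')),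
        (d' (Sum.inl ⟨k', j'⟩) : ℤ) =
          (d (Sum.inl ⟨k', j'⟩) : ℤ) - (if k' = k then 1 else 0) := by
      intro k' j'
      have h1 := hble (Sum.inl ⟨k', j'⟩)
      have h2 := hval (Sum.inl ⟨k', j'⟩)
      rw [hbinl] at h1 h2
      split_ifs at h1 h2 ⊢ <;> omega
    have hd'inr : ∀ (l' : Fin 3) (j' : Fin (p l')),
        (d' (Sum.inr ⟨l', j'⟩) : ℤ) =
          (d (Sum.inr ⟨l', j'⟩) : ℤ) - (if l' = l then 1 else 0) := by
      intro l' j'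
      have h1 := hble (Sum.inr ⟨l', j'⟩)
      have h2 := hval (Sum.inr ⟨l', j'⟩)
      rw [hbinr] at h1 h2
      split_ifs at h1 h2 ⊢ <;> omega
    have hdelta' : ∀ (k' : Fin 3) (j : Fin (p k')), delta p d' k' j =
        delta p d k' j - (if k' = k then 1 else 0) + (if k' = l then 1 else 0) := by
      intro k' j
      unfold delta
      rw [hd'inl, hd'inr]
      ring
    have hconst' : ∀ k' (j : Fin (p k')), delta p d' k' j = delta p d' k' ⟨0, hp k'⟩ := by
      intro k' j
      rw [hdelta', hdelta', hconst k' j]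
    have hsum' : (∑ k', delta p d' k' ⟨0, hp k'⟩) = 0 := by
      simp only [hdelta']
      rw [Finset.sum_add_distrib, Finset.sum_sub_distrib, hsum]
      rw [Finset.sum_ite_eq' Finset.univ k (fun _ => (1:ℤ)),
        Finset.sum_ite_eq' Finset.univ l (fun _ => (1:ℤ))]
      simp
    have hdeg : (∑ e : ReconArrows p, d' e) < N := by
      have h1 : (∑ e : ReconArrows p, d e) = (∑ e, b e) + ∑ e, d' e := by
        conv_lhs => rw [hdbd']
        simp [Finsupp.add_apply, Finset.sum_add_distrib]
      have h2 : 0 < ∑ e : ReconArrows p, b e := by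
        refine Finset.sum_pos' (fun e _ => Nat.zero_le _) ⟨Sum.inl ⟨k, ⟨0, hp k⟩⟩,
          Finset.mem_univ _, ?_⟩
        rw [hbinl]
        simp
      omega
    have hmono : (monomial d (1:ℂ) : ReconP p) = monomial b 1 * monomial d' 1 := by
      rw [monomial_mul, one_mul, ← hdbd']
    rw [hmono]
    exact mul_mem (Algebra.subset_adjoin hgen) (ih _ hdeg d' rfl hconst' hsum')
  · push_neg at hpos
    have hzero : ∀ k', delta p d k' ⟨0, hp k'⟩ = 0 := by
      have h := (Finset.sum_eq_zero_iff_of_nonpos (fun k' _ => hpos k')).mp hsum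
      exact fun k' => h k' (Finset.mem_univ k')
    have heq : ∀ (k' : Fin 3) (j : Fin (p k')), d (Sum.inr ⟨k', j⟩) = d (Sum.inl ⟨k', j⟩) := by
      intro k' j
      have h1 := hconst k' j
      rw [hzero] at h1
      unfold delta at h1
      omega
    have hclosed : (monomial d (1:ℂ) : ReconP p) =
        ∏ ki : Σ k : Fin 3, Fin (p k),
          (X (Sum.inl ki) * X (Sum.inr ki) : ReconP p) ^ (d (Sum.inl ki)) := by
      have hfac : ∀ ki : Σ k : Fin 3, Fin (p k),
          (X (Sum.inl ki) * X (Sum.inr ki) : ReconP p) ^ (d (Sum.inl ki)) =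
            monomial ((d (Sum.inl ki)) •
              (Finsupp.single (Sum.inl ki : ReconArrows p) 1 + Finsupp.single (Sum.inr ki) 1)) 1 := by
        intro ki
        rw [X_eq_monomial, X_eq_monomial, monomial_mul, one_mul, monomial_pow, one_pow]
      rw [Finset.prod_congr rfl (fun ki _ => hfac ki), prod_monomial_one]
      have hexp : d = ∑ ki : Σ k : Fin 3, Fin (p k), (d (Sum.inl ki)) •
          (Finsupp.single (Sum.inl ki : ReconArrows p) 1 + Finsupp.single (Sum.inr ki) 1) := by
        ext e
        rw [Finsupp.finset_sum_apply]
        have hterm : ∀ (ki ki0 : Σ k : Fin 3, Fin (p k)),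
            (((d (Sum.inl ki)) • (Finsupp.single (Sum.inl ki : ReconArrows p) 1
              + Finsupp.single (Sum.inr ki) 1) : ReconArrows p →₀ ℕ)) (Sum.inl ki0) =
            if ki = ki0 then d (Sum.inl ki) else 0 := by
          intro ki ki0
          rw [Finsupp.smul_apply, Finsupp.add_apply, Finsupp.single_apply, Finsupp.single_apply]
          have hfalse : ¬ ((Sum.inr ki : ReconArrows p) = Sum.inl ki0) := by simp
          rw [if_neg hfalse, add_zero]
          by_cases h : ki = ki0
          · subst h; simp
          · rw [if_neg (fun hc => h (by simpa using hc)), if_neg h, smul_zero]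
        have hterm' : ∀ (ki ki0 : Σ k : Fin 3, Fin (p k)),
            (((d (Sum.inl ki)) • (Finsupp.single (Sum.inl ki : ReconArrows p) 1
              + Finsupp.single (Sum.inr ki) 1) : ReconArrows p →₀ ℕ)) (Sum.inr ki0) =
            if ki = ki0 then d (Sum.inl ki) else 0 := by
          intro ki ki0
          rw [Finsupp.smul_apply, Finsupp.add_apply, Finsupp.single_apply, Finsupp.single_apply]
          have hfalse : ¬ ((Sum.inl ki : ReconArrows p) = Sum.inr ki0) := by simp
          rw [if_neg hfalse, zero_add]
          by_cases h : ki = ki0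
          · subst h; simp
          · rw [if_neg (fun hc => h (by simpa using hc)), if_neg h, smul_zero]
        rcases e with ki0 | ki0
        · rw [Finset.sum_congr rfl (fun ki _ => hterm ki ki0), Finset.sum_ite_eq' Finset.univ]
          simp
        · rw [Finset.sum_congr rfl (fun ki _ => hterm' ki ki0), Finset.sum_ite_eq' Finset.univ]
          simp [heq ki0.1 ki0.2]
      conv_lhs => rw [hexp]
    rw [hclosed]
    refine prod_mem fun ki _ => pow_mem (Algebra.subset_adjoin ?_) _
    exact Set.mem_union_left _ (Set.mem_range_self ki)

lemma comp0_mem_adjoin (p : Fin 3 → ℕ) (hp : ∀ k, 0 < p k) (f : ReconP p) :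
    weightedHomogeneousComponent (rwt p) 0 f ∈ Algebra.adjoin ℂ (S0 p) := by
  classical
  have hhom : IsWeightedHomogeneous (rwt p) (weightedHomogeneousComponent (rwt p) 0 f) 0 :=
    weightedHomogeneousComponent_isWeightedHomogeneous 0 f
  rw [(weightedHomogeneousComponent (rwt p) 0 f).as_sum]
  refine Subalgebra.sum_mem _ fun dd hdd => ?_
  have hw : Finsupp.weight (rwt p) dd = 0 := hhom (mem_support_iff.mp hdd)
  obtain ⟨hconst, hsum⟩ := balance_of_weight_zero p hp hw
  have hsm : (monomial dd (coeff dd (weightedHomogeneousComponent (rwt p) 0 f)) : ReconP p) =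
      (coeff dd (weightedHomogeneousComponent (rwt p) 0 f)) • monomial dd 1 := by
    rw [smul_monomial, smul_eq_mul, mul_one]
  rw [hsm]
  exact Subalgebra.smul_mem _ (monomial_mem_adjoin p hp _ dd rfl hconst hsum) _

/-- The torus-invariant ring `R^G` is generated as a `ℂ`-algebra by the set `S₁`
consisting of the two-cycles `d_{k,i}u_{k,i}` together with the cycles `D_kU_l`:
if `σ_μ(f) - f ∈ I` for every `μ : Q₀ → ℂˣ`, then the image of `f` in `R = P/I` lies
in the `ℂ`-subalgebra generated by the images of these cycles. -/
theorem stmt_14 (p : Fin 3 → ℕ) (hp : ∀ k, 0 < p k)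
    (f : ReconP p)
    (hf : ∀ μ : ReconVtx → ℂˣ, reconSigma p μ f - f ∈ ReconI p) :
    reconPi p f ∈ Algebra.adjoin ℂ
      ((Set.range fun ki : Σ k : Fin 3, Fin (p k) =>
          reconPi p (X (Sum.inl ki) * X (Sum.inr ki))) ∪
       Set.range fun kl : Fin 3 × Fin 3 => reconPi p (ReconD p kl.1 * ReconU p kl.2)) := by
  classical
  have hfin := weightedHomogeneousComponent_finsupp (w := rwt p) (φ := f)
  have hdec : f = ∑ m ∈ hfin.toFinset, weightedHomogeneousComponent (rwt p) m f := by
    rw [← finsum_eq_sum _ hfin, sum_weightedHomogeneousComponent]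
  have hIdiff : f - weightedHomogeneousComponent (rwt p) 0 f ∈ ReconI p := by
    by_cases h0 : (0 : ReconVtx →₀ ℤ) ∈ hfin.toFinset
    · have hsplit : f - weightedHomogeneousComponent (rwt p) 0 f =
          ∑ m ∈ hfin.toFinset.erase 0, weightedHomogeneousComponent (rwt p) m f := by
        nth_rewrite 1 [hdec]
        rw [← Finset.add_sum_erase _ _ h0]
        ring
      rw [hsplit]
      exact Ideal.sum_mem _ fun m hm => comp_ne_zero_mem p hp f hf (Finset.ne_of_mem_erase hm)
    · have hz : weightedHomogeneousComponent (rwt p) 0 f = 0 := by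
        by_contra hne
        exact h0 (hfin.mem_toFinset.mpr hne)
      rw [hz, sub_zero, hdec]
      exact Ideal.sum_mem _ fun m hm =>
        comp_ne_zero_mem p hp f hf (by rintro rfl; exact h0 hm)
  have hπ : reconPi p f = reconPi p (weightedHomogeneousComponent (rwt p) 0 f) := by
    have h := Ideal.Quotient.eq.mpr hIdiff
    simpa [reconPi, Ideal.Quotient.mkₐ_eq_mk] using h
  rw [hπ]
  have hmem := comp0_mem_adjoin p hp f
  have himg : reconPi p (weightedHomogeneousComponent (rwt p) 0 f) ∈
      (Algebra.adjoin ℂ (S0 p)).map (reconPi p) := Subalgebra.mem_map.mpr ⟨_, hmem, rfl⟩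
  rw [AlgHom.map_adjoin] at himg
  have hset : reconPi p '' (S0 p) =
      ((Set.range fun ki : Σ k : Fin 3, Fin (p k) =>
          reconPi p (X (Sum.inl ki) * X (Sum.inr ki))) ∪
       Set.range fun kl : Fin 3 × Fin 3 => reconPi p (ReconD p kl.1 * ReconU p kl.2)) := by
    rw [S0, Set.image_union, ← Set.range_comp, ← Set.range_comp]
    rfl
  rwa [hset] at himg
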